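/- Let E and F be nonempty closed convex sets in ℝⁿ such that E + F = ℝⁿ and for every u ∈ ℝⁿ the metric projections p_E(u) and p_F(u) are orthogonal, i.e., p_E(u) · p_F(u) = 0. Then the origin belongs to E ∩ F. -/

import Mathlib

set_option maxHeartbeats 1000000


open RealInnerProductSpace Pointwise

/-- The (negative) polar set of `X`. -/
def polarSet {n : ℕ} (X : Set (EuclideanSpace ℝ (Fin n))) : Set (EuclideanSpace ℝ (Fin n)) :=
  {x | ∀ e ∈ X, ⟪x, e⟫ ≤ 0}

/-- The orthogonal complement of a set `X`. -/
def orthComp {n : ℕ} (X : Set (EuclideanSpace ℝ (Fin n))) : Set (EuclideanSpace ℝ (Fin n)) :=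
  {x | ∀ u ∈ X, ⟪x, u⟫ = 0}

/-- `y` is the metric projection of `u` on `E`: it belongs to `E` and is nearest to `u`. -/
def IsMetricProj {n : ℕ} (E : Set (EuclideanSpace ℝ (Fin n)))
    (u y : EuclideanSpace ℝ (Fin n)) : Prop :=
  y ∈ E ∧ ∀ x ∈ E, ‖u - y‖ ≤ ‖u - x‖

/-- Variational inequality for a nearest point to the origin in a convex set. -/
lemma varineq {n : ℕ} {E : Set (EuclideanSpace ℝ (Fin n))} (hconv : Convex ℝ E)
    {a : EuclideanSpace ℝ (Fin n)} (ha : a ∈ E) (hmin : ∀ x ∈ E, ‖a‖ ≤ ‖x‖) :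
    ∀ x ∈ E, ‖a‖ ^ 2 ≤ ⟪a, x⟫ := by
  intro x hx
  by_contra hlt
  push_neg at hlt
  have hc0 : ⟪a, x - a⟫ < 0 := by
    rw [inner_sub_right, real_inner_self_eq_norm_sq]; linarith
  have hxa : x - a ≠ 0 := by
    intro h
    rw [h, inner_zero_right] at hc0
    exact absurd hc0 (lt_irrefl 0)
  set c : ℝ := ⟪a, x - a⟫ with hc
  set d : ℝ := ‖x - a‖ ^ 2 with hd
  have hd0 : 0 < d := by
    rw [hd]
    have h9 : (0:ℝ) < ‖x - a‖ := norm_pos_iff.mpr hxa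
    positivity
  set s : ℝ := min 1 (-c / d) with hs
  have hs0 : 0 < s := lt_min one_pos (div_pos (by linarith) hd0)
  have hs1 : s ≤ 1 := min_le_left _ _
  have hsd : s * d ≤ -c := by
    have h1 : s ≤ -c / d := min_le_right _ _
    calc s * d ≤ (-c / d) * d := by nlinarith
    _ = -c := by field_simp
  have hmem : a + s • (x - a) ∈ E := by
    have h2 := hconv ha hx (by linarith : (0:ℝ) ≤ 1 - s) hs0.le (by ring)
    have h3 : (1 - s) • a + s • x = a + s • (x - a) := by module
    rwa [h3] at h2
  have hn := hmin _ hmem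
  have hsq : ‖a + s • (x - a)‖ ^ 2 = ‖a‖ ^ 2 + 2 * s * c + s ^ 2 * d := by
    rw [norm_add_sq_real, real_inner_smul_right, norm_smul, Real.norm_eq_abs, mul_pow, sq_abs,
      ← hc, ← hd]
    ring
  have hsq2 : ‖a‖ ^ 2 ≤ ‖a + s • (x - a)‖ ^ 2 := by
    have := mul_self_le_mul_self (norm_nonneg a) hn
    nlinarith
  nlinarith

lemma aux_mem {n : ℕ} {E F : Set (EuclideanSpace ℝ (Fin n))}
    (hEcl : IsClosed E) (hEconv : Convex ℝ E) (hEne : E.Nonempty)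
    (hFcl : IsClosed F) (hFne : F.Nonempty)
    (hsum : E + F = Set.univ)
    (horth : ∀ u y z : EuclideanSpace ℝ (Fin n),
      IsMetricProj E u y → IsMetricProj F u z → ⟪y, z⟫ = 0) :
    (0 : EuclideanSpace ℝ (Fin n)) ∈ E := by
  obtain ⟨a, haE, hadist⟩ := hEcl.exists_infDist_eq_dist hEne 0
  have hamin : ∀ x ∈ E, ‖a‖ ≤ ‖x‖ := by
    intro x hx
    have h := Metric.infDist_le_dist_of_mem (x := (0 : EuclideanSpace ℝ (Fin n))) hx
    rw [hadist] at h
    simpa [dist_eq_norm] using h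
  by_contra h0
  have hane : a ≠ 0 := fun h => h0 (h ▸ haE)
  have hna : (0 : ℝ) < ‖a‖ := norm_pos_iff.mpr hane
  have hkey : ∀ x ∈ E, ‖a‖ ^ 2 ≤ ⟪a, x⟫ := varineq hEconv haE hamin
  obtain ⟨e, he, f, hf, hef⟩ : ∃ e ∈ E, ∃ f ∈ F, e + f = -a := by
    have hmem : (-a : EuclideanSpace ℝ (Fin n)) ∈ E + F := by rw [hsum]; trivial
    exact Set.mem_add.mp hmem
  have hfa : ⟪a, f⟫ ≤ -2 * ‖a‖ ^ 2 := by
    have h1 : ⟪a, e + f⟫ = ⟪a, -a⟫ := by rw [hef]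
    rw [inner_add_right, inner_neg_right, real_inner_self_eq_norm_sq] at h1
    have h2 := hkey e he
    linarith
  set t : ℝ := ‖f‖ ^ 2 / (4 * ‖a‖ ^ 2) + 1 with ht
  have ht0 : (0 : ℝ) ≤ t := by positivity
  have ht4 : t * (4 * ‖a‖ ^ 2) = ‖f‖ ^ 2 + 4 * ‖a‖ ^ 2 := by
    rw [ht, add_mul, div_mul_cancel₀ _ (mul_pos four_pos (pow_pos hna 2)).ne', one_mul]
  set u : EuclideanSpace ℝ (Fin n) := -(t • a) with hu
  have hprojE : IsMetricProj E u a := by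
    refine ⟨haE, fun x hx => ?_⟩
    have h1 : ‖u - a‖ = (t + 1) * ‖a‖ := by
      have hd : u - a = -((t + 1) • a) := by rw [hu]; module
      rw [hd, norm_neg, norm_smul, Real.norm_eq_abs, abs_of_nonneg (by linarith)]
    have h2 : (t + 1) * ‖a‖ ^ 2 ≤ ⟪a, x - u⟫ := by
      rw [inner_sub_right, hu, inner_neg_right, real_inner_smul_right,
        real_inner_self_eq_norm_sq]
      have := hkey x hx
      nlinarith
    have h3 : ⟪a, x - u⟫ ≤ ‖a‖ * ‖x - u‖ := real_inner_le_norm a (x - u)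
    have h4 : ‖x - u‖ = ‖u - x‖ := norm_sub_rev x u
    rw [h1]
    nlinarith
  obtain ⟨z, hzF, hzdist⟩ := hFcl.exists_infDist_eq_dist hFne u
  have hzmin : ∀ x ∈ F, ‖u - z‖ ≤ ‖u - x‖ := by
    intro x hx
    have h := Metric.infDist_le_dist_of_mem (x := u) hx
    rw [hzdist] at h
    simpa [dist_eq_norm] using h
  have haz : ⟪a, z⟫ = 0 := horth u a z hprojE ⟨hzF, hzmin⟩
  have h4 : ‖u - z‖ ≤ ‖u - f‖ := hzmin f hf
  have hun : ‖u‖ ^ 2 = t ^ 2 * ‖a‖ ^ 2 := by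
    rw [hu, norm_neg, norm_smul, Real.norm_eq_abs, mul_pow, sq_abs]
  have huz : ⟪u, z⟫ = 0 := by
    rw [hu, inner_neg_left, real_inner_smul_left, haz]; ring
  have huf : ⟪u, f⟫ = -t * ⟪a, f⟫ := by
    rw [hu, inner_neg_left, real_inner_smul_left]; ring
  have e1 : ‖u - z‖ ^ 2 = t ^ 2 * ‖a‖ ^ 2 + ‖z‖ ^ 2 := by
    rw [norm_sub_sq_real, hun, huz]; ring
  have e2 : ‖u - f‖ ^ 2 = t ^ 2 * ‖a‖ ^ 2 + 2 * t * ⟪a, f⟫ + ‖f‖ ^ 2 := by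
    rw [norm_sub_sq_real, hun, huf]; ring
  have hz2 : (0 : ℝ) ≤ ‖z‖ ^ 2 := by positivity
  nlinarith [norm_nonneg (u - z), norm_nonneg (u - f), sq_nonneg (‖u - z‖ + ‖u - f‖)]

theorem origin_mem_of_orthogonal_projections
(n : ℕ) (E F : Set (EuclideanSpace ℝ (Fin n)))
    (hEne : E.Nonempty) (hEcl : IsClosed E) (hEconv : Convex ℝ E)
    (hFne : F.Nonempty) (hFcl : IsClosed F) (hFconv : Convex ℝ F)
    (hsum : E + F = Set.univ)
    (horth : ∀ u y z : EuclideanSpace ℝ (Fin n),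
      IsMetricProj E u y → IsMetricProj F u z → ⟪y, z⟫ = 0) :
    (0 : EuclideanSpace ℝ (Fin n)) ∈ E ∩ F := by
  constructor
  · exact aux_mem hEcl hEconv hEne hFcl hFne hsum horth
  · refine aux_mem hFcl hFconv hFne hEcl hEne ?_ ?_
    · rw [add_comm]; exact hsum
    · intro u y z hy hz
      rw [real_inner_comm]
      exact horth u z y hz hy
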